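/- Let X₀,…,X_{n-1} be independent complex-valued random variables with |X_i| = 1 almost surely. Then for every α ≥ 0, P(|CF_n(s) − E[CF_n(s)]| ≥ α) ≤ 2 exp(−α²/2). -/

import Mathlib

open MeasureTheory Finset

noncomputable def ofdm (n : ℕ) (T : ℝ) (x : Fin n → ℂ) (t : ℝ) : ℂ :=
  ((Real.sqrt n : ℝ) : ℂ)⁻¹ *
    ∑ i : Fin n, x i * Complex.exp (Complex.I * ((2 * Real.pi * (i : ℕ) * t / T : ℝ) : ℂ))

noncomputable def crest (n : ℕ) (T : ℝ) (x : Fin n → ℂ) : ℝ :=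
  sSup ((fun t => ‖ofdm n T x t‖) '' Set.Icc (0 : ℝ) T)


section McDiarmidAux
open Real


lemma denom_pos {p : ℝ} (hp0 : 0 ≤ p) (hp1 : p ≤ 1) (h : ℝ) :
    0 < 1 - p + p * Real.exp h := by
  rcases lt_or_eq_of_le hp1 with h1 | h1
  · have : 0 ≤ p * Real.exp h := mul_nonneg hp0 (exp_pos h).le
    linarith
  · subst h1; simpa using exp_pos h

lemma hoeffding_core {p : ℝ} (hp0 : 0 ≤ p) (hp1 : p ≤ 1) (h : ℝ) :
    Real.log (1 - p + p * Real.exp h) ≤ p * h + h ^ 2 / 8 := by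
  -- define ψ h = p*h + h^2/8 - log(...)
  set D : ℝ → ℝ := fun h => 1 - p + p * Real.exp h with hD
  have hDpos : ∀ h, 0 < D h := fun h => denom_pos hp0 hp1 h
  set ψ : ℝ → ℝ := fun h => p * h + h ^ 2 / 8 - Real.log (D h) with hψ
  set g : ℝ → ℝ := fun h => p + h / 4 - p * Real.exp h / D h with hg
  have hD' : ∀ h, HasDerivAt D (p * Real.exp h) h := by
    intro h
    exact ((Real.hasDerivAt_exp h).const_mul p).const_add (1 - p)
  have hψ' : ∀ h, HasDerivAt ψ (g h) h := by
    intro h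
    have hlog : HasDerivAt (fun h => Real.log (D h)) (p * Real.exp h / D h) h :=
      (hD' h).log (hDpos h).ne'
    have h1 : HasDerivAt (fun h : ℝ => p * h + h ^ 2 / 8) (p + h * 2 / 8) h := by
      have := ((hasDerivAt_pow 2 h).div_const 8).const_add (p * h)
      have h2 : HasDerivAt (fun h : ℝ => p * h) p h := by
        simpa using (hasDerivAt_id h).const_mul p
      simpa [pow_one, mul_comm] using h2.fun_add ((hasDerivAt_pow 2 h).div_const 8)
    have := h1.fun_sub hlog
    refine this.congr_deriv ?_
    simp [hg]; ring
  have hg' : ∀ h, HasDerivAt g (1 / 4 - (p * Real.exp h * D h - p * Real.exp h * (p * Real.exp h)) / (D h) ^ 2) h := by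
    intro h
    have hq : HasDerivAt (fun h => p * Real.exp h / D h)
        ((p * Real.exp h * D h - p * Real.exp h * (p * Real.exp h)) / (D h) ^ 2) h := by
      have hnum : HasDerivAt (fun h => p * Real.exp h) (p * Real.exp h) h :=
        (Real.hasDerivAt_exp h).const_mul p
      exact hnum.div (hD' h) (hDpos h).ne'
    have h14 : HasDerivAt (fun h : ℝ => p + h / 4) (1 / 4) h := by
      simpa using ((hasDerivAt_id h).div_const 4).const_add p
    simpa using h14.fun_sub hq
  have hgderiv_nonneg : ∀ h, 0 ≤ 1 / 4 - (p * Real.exp h * D h - p * Real.exp h * (p * Real.exp h)) / (D h) ^ 2 := by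
    intro h
    set u := p * Real.exp h with hu
    have hu0 : 0 ≤ u := mul_nonneg hp0 (exp_pos h).le
    have hv0 : 0 ≤ 1 - p := by linarith
    have hDu : D h = (1 - p) + u := by simp [hD, hu]
    have key : u * D h - u * u ≤ (D h) ^ 2 / 4 := by
      rw [hDu]; nlinarith [sq_nonneg ((1 - p) - u)]
    have hD2 : 0 < (D h) ^ 2 := pow_pos (hDpos h) 2
    rw [sub_nonneg, div_le_iff₀ hD2]
    calc u * D h - u * u ≤ (D h) ^ 2 / 4 := key
      _ = 1 / 4 * (D h) ^ 2 := by ring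
  have hgmono : Monotone g :=
    monotone_of_deriv_nonneg (fun h => (hg' h).differentiableAt) (by
      intro h
      rw [(hg' h).deriv]
      exact hgderiv_nonneg h)
  have hg0 : g 0 = 0 := by
    simp [hg, hD]
  have hψ0 : ψ 0 = 0 := by simp [hψ, hD]
  -- ψ is nonneg: min at 0
  have hψcont : Continuous ψ :=
    Differentiable.continuous (fun x => (hψ' x).differentiableAt)
  have key : 0 ≤ ψ h := by
    rcases le_or_gt 0 h with hh | hh
    · have hmono : MonotoneOn ψ (Set.Ici 0) := by
        apply monotoneOn_of_deriv_nonneg (convex_Ici 0) hψcont.continuousOn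
        · intro x _
          exact (hψ' x).differentiableAt.differentiableWithinAt
        · intro x hx
          rw [(hψ' x).deriv, ← hg0]
          exact hgmono (le_of_lt (by simpa [interior_Ici] using hx))
      have := hmono Set.self_mem_Ici (Set.mem_Ici.2 hh) hh
      rwa [hψ0] at this
    · have hanti : AntitoneOn ψ (Set.Iic 0) := by
        apply antitoneOn_of_deriv_nonpos (convex_Iic 0) hψcont.continuousOn
        · intro x _
          exact (hψ' x).differentiableAt.differentiableWithinAt
        · intro x hx
          rw [(hψ' x).deriv, ← hg0]
          exact hgmono (le_of_lt (by simpa [interior_Iic] using hx))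
      have := hanti (Set.mem_Iic.2 hh.le) Set.self_mem_Iic hh.le
      rwa [hψ0] at this
  have hkey : Real.log (D h) ≤ p * h + h ^ 2 / 8 := by
    simp only [hψ, sub_nonneg] at key
    linarith
  exact hkey

lemma my_integrable_of_bound {Ω' : Type*} [MeasurableSpace Ω'] (μ : Measure Ω')
    [IsFiniteMeasure μ] (f : Ω' → ℝ) (hf : AEStronglyMeasurable f μ) (C : ℝ)
    (h : ∀ ω, |f ω| ≤ C) : Integrable f μ :=
  (integrable_const C).mono' hf (Filter.Eventually.of_forall fun ω => by simpa using h ω)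

lemma hoeffding_lemma {Ω' : Type*} [MeasurableSpace Ω'] (μ : Measure Ω') [IsProbabilityMeasure μ]
    (Y : Ω' → ℝ) (hY : Measurable Y) (a b : ℝ) (hab : ∀ ω, Y ω ∈ Set.Icc a b) (t : ℝ) :
    ∫ ω, Real.exp (t * Y ω) ∂μ ≤ Real.exp (t * ∫ ω, Y ω ∂μ + t ^ 2 * (b - a) ^ 2 / 8) := by
  have hC : ∀ ω, |Y ω| ≤ max |a| |b| := fun ω =>
    abs_le.2 ⟨le_trans (neg_le_neg (le_max_left |a| |b|)) (le_trans (neg_abs_le a) (hab ω).1),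
      le_trans (hab ω).2 (le_trans (le_abs_self b) (le_max_right |a| |b|))⟩
  have hYint : Integrable Y μ := my_integrable_of_bound μ Y hY.aestronglyMeasurable _ hC
  have hexpint : ∀ s : ℝ, Integrable (fun ω => Real.exp (s * Y ω)) μ := by
    intro s
    refine my_integrable_of_bound μ _ ((Real.measurable_exp.comp (hY.const_mul s)).aestronglyMeasurable) (Real.exp (|s| * max |a| |b|)) fun ω => ?_
    rw [abs_of_pos (exp_pos _), Real.exp_le_exp]
    calc s * Y ω ≤ |s * Y ω| := le_abs_self _
      _ = |s| * |Y ω| := abs_mul s (Y ω)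
      _ ≤ |s| * max |a| |b| := by
          exact mul_le_mul_of_nonneg_left (hC ω) (abs_nonneg s)
  set m := ∫ ω, Y ω ∂μ with hm
  have hma : a ≤ m := by
    have : ∫ _ω, a ∂μ ≤ ∫ ω, Y ω ∂μ := integral_mono (integrable_const a) hYint fun ω => (hab ω).1
    simpa using this
  have hmb : m ≤ b := by
    have : ∫ ω, Y ω ∂μ ≤ ∫ _ω, b ∂μ := integral_mono hYint (integrable_const b) fun ω => (hab ω).2
    simpa using this
  rcases eq_or_lt_of_le (le_trans hma hmb) with hab' | hab'
  · -- a = b, so Y is constant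
    have hYconst : ∀ ω, Y ω = a := fun ω => le_antisymm (hab' ▸ (hab ω).2) (hab ω).1
    have hmeq : m = a := by
      rw [hm]
      simp only [hYconst]
      simp
    simp only [hYconst, hmeq]
    rw [integral_const]
    simp only [measure_univ, ENNReal.toReal_one, one_smul, smul_eq_mul]
    rw [probReal_univ, one_mul, Real.exp_le_exp]
    nlinarith [sq_nonneg (t * (b - a))]
  · have hba : 0 < b - a := sub_pos.2 hab'
    set p := (m - a) / (b - a) with hp
    have hp0 : 0 ≤ p := div_nonneg (by linarith) hba.le
    have hp1 : p ≤ 1 := by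
      rw [div_le_one hba]; linarith
    set h := t * (b - a) with hh
    -- pointwise convexity bound
    have hconv : ∀ ω, Real.exp (t * Y ω) ≤
        (b - Y ω) / (b - a) * Real.exp (t * a) + (Y ω - a) / (b - a) * Real.exp (t * b) := by
      intro ω
      have h1 : (0:ℝ) ≤ (b - Y ω) / (b - a) := div_nonneg (by linarith [(hab ω).2]) hba.le
      have h2 : (0:ℝ) ≤ (Y ω - a) / (b - a) := div_nonneg (by linarith [(hab ω).1]) hba.le
      have h3 : (b - Y ω) / (b - a) + (Y ω - a) / (b - a) = 1 := by
        field_simp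
        ring
      have := convexOn_exp.2 (Set.mem_univ (t * a)) (Set.mem_univ (t * b)) h1 h2 h3
      simp only [smul_eq_mul] at this
      have harg : (b - Y ω) / (b - a) * (t * a) + (Y ω - a) / (b - a) * (t * b) = t * Y ω := by
        field_simp
        ring
      rwa [harg] at this
    have hint : ∫ ω, Real.exp (t * Y ω) ∂μ ≤
        (b - m) / (b - a) * Real.exp (t * a) + (m - a) / (b - a) * Real.exp (t * b) := by
      have hrhs : Integrable (fun ω => (b - Y ω) / (b - a) * Real.exp (t * a)
          + (Y ω - a) / (b - a) * Real.exp (t * b)) μ := by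
        apply Integrable.add
        · exact ((((integrable_const b).sub hYint).div_const (b - a)).mul_const _)
        · exact (((hYint.sub (integrable_const a)).div_const (b - a)).mul_const _)
      have i1 : (∫ ω, (b - Y ω) / (b - a) * Real.exp (t * a) ∂μ)
          = (b - m) / (b - a) * Real.exp (t * a) := by
        rw [integral_mul_const]
        congr 1
        simp_rw [div_eq_mul_inv]
        rw [integral_mul_const, integral_sub (integrable_const b) hYint, integral_const]
        simp [hm]
      have i2 : (∫ ω, (Y ω - a) / (b - a) * Real.exp (t * b) ∂μ)
          = (m - a) / (b - a) * Real.exp (t * b) := by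
        rw [integral_mul_const]
        congr 1
        simp_rw [div_eq_mul_inv]
        rw [integral_mul_const, integral_sub hYint (integrable_const a), integral_const]
        simp [hm]
      have ha1 : Integrable (fun ω => (b - Y ω) / (b - a) * Real.exp (t * a)) μ :=
        (((integrable_const b).sub hYint).div_const (b - a)).mul_const _
      have ha2 : Integrable (fun ω => (Y ω - a) / (b - a) * Real.exp (t * b)) μ :=
        ((hYint.sub (integrable_const a)).div_const (b - a)).mul_const _
      have := integral_mono (hexpint t) hrhs hconv
      refine le_trans this (le_of_eq ?_)
      rw [integral_add ha1 ha2, i1, i2]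
    refine le_trans hint ?_
    have key : (b - m) / (b - a) * Real.exp (t * a) + (m - a) / (b - a) * Real.exp (t * b)
        = Real.exp (t * a) * (1 - p + p * Real.exp h) := by
      have hb : Real.exp (t * b) = Real.exp (t * a) * Real.exp h := by
        rw [← Real.exp_add]; congr 1; rw [hh]; ring
      have h1p : (b - m) / (b - a) = 1 - p := by
        rw [hp]; field_simp; ring
      rw [hb, h1p, hp]; ring
    rw [key]
    have hDpos : 0 < 1 - p + p * Real.exp h := by
      by_cases hplt : p < 1
      · nlinarith [mul_nonneg hp0 (exp_pos h).le]
      · have hpe : p = 1 := le_antisymm hp1 (not_lt.1 hplt)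
        rw [hpe]; simpa using exp_pos h
    have hlog := hoeffding_core hp0 hp1 h
    have : 1 - p + p * Real.exp h ≤ Real.exp (p * h + h ^ 2 / 8) := by
      calc 1 - p + p * Real.exp h = Real.exp (Real.log (1 - p + p * Real.exp h)) :=
            (Real.exp_log hDpos).symm
        _ ≤ _ := Real.exp_le_exp.2 hlog
    calc Real.exp (t * a) * (1 - p + p * Real.exp h)
        ≤ Real.exp (t * a) * Real.exp (p * h + h ^ 2 / 8) :=
          mul_le_mul_of_nonneg_left this (exp_pos _).le
      _ = Real.exp (t * a + (p * h + h ^ 2 / 8)) := by rw [← Real.exp_add]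
      _ = Real.exp (t * m + t ^ 2 * (b - a) ^ 2 / 8) := by
          congr 1
          have hph : p * h = t * (m - a) := by
            rw [hp, hh]; field_simp
          have hh2 : h ^ 2 = t ^ 2 * (b - a) ^ 2 := by rw [hh]; ring
          rw [hph, hh2]; ring

lemma tensor : ∀ (n : ℕ) (ν : Fin n → Measure ℂ), (∀ i, IsProbabilityMeasure (ν i)) →
    ∀ (F : (Fin n → ℂ) → ℝ), Measurable F →
    ∀ (M : ℝ), (∀ x, |F x| ≤ M) →
    ∀ (c : Fin n → ℝ),
    (∀ (i : Fin n) (x y : Fin n → ℂ), (∀ j, j ≠ i → x j = y j) → F x - F y ≤ c i) →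
    ∀ t : ℝ, ∫ x, Real.exp (t * F x) ∂(Measure.pi ν) ≤
      Real.exp (t * ∫ x, F x ∂(Measure.pi ν) + t ^ 2 * (∑ i, (c i) ^ 2) / 8) := by
  intro n
  induction n with
  | zero =>
    intro ν hνp F hF M hM c hc t
    rw [Measure.pi_of_empty ν]
    have h1 : StronglyMeasurable (fun x : Fin 0 → ℂ => Real.exp (t * F x)) :=
      (Real.measurable_exp.comp (hF.const_mul t)).stronglyMeasurable
    rw [integral_dirac' _ _ h1, integral_dirac' _ _ hF.stronglyMeasurable]
    simp
  | succ n ih =>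
    intro ν hνp F hF M hM c hc t
    haveI := hνp
    set ν' : Fin n → Measure ℂ := fun j => ν ((0 : Fin (n + 1)).succAbove j) with hν'
    haveI hν'p : ∀ j, IsProbabilityMeasure (ν' j) := fun j => hνp _
    set π' : Measure (Fin n → ℂ) := Measure.pi ν' with hπ'
    haveI : IsProbabilityMeasure π' := by
      constructor
      rw [hπ', ← Set.pi_univ Set.univ, Measure.pi_pi]
      simp [measure_univ]
    set e := MeasurableEquiv.piFinSuccAbove (fun _ : Fin (n + 1) => ℂ) 0 with he
    have hmp : MeasurePreserving e (Measure.pi ν) ((ν 0).prod π') :=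
      measurePreserving_piFinSuccAbove ν 0
    set G : ℂ × (Fin n → ℂ) → ℝ := fun q => F (e.symm q) with hG
    have hGmeas : Measurable G := hF.comp e.symm.measurable
    have hGbd : ∀ q, |G q| ≤ M := fun q => hM _
    -- transfer integrals
    have htrans : ∀ (g : (Fin (n+1) → ℂ) → ℝ), (∫ x, g x ∂(Measure.pi ν)) =
        ∫ q, g (e.symm q) ∂((ν 0).prod π') := by
      intro g
      rw [← hmp.integral_comp']
      congr 1
      ext x
      rw [MeasurableEquiv.symm_apply_apply]
    -- bounded diff in coordinate 0 for fixed x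
    have hdiff0 : ∀ (x : Fin n → ℂ) (y y' : ℂ), G (y, x) - G (y', x) ≤ c 0 := by
      intro x y y'
      apply hc 0
      intro j hj
      obtain ⟨k, rfl⟩ := Fin.exists_succAbove_eq hj
      simp [hG, he, MeasurableEquiv.piFinSuccAbove_symm_apply, Fin.insertNthEquiv,
        Fin.insertNth_apply_succAbove]
    -- conditional mean
    set m : (Fin n → ℂ) → ℝ := fun x => ∫ y, G (y, x) ∂(ν 0) with hm
    have hmmeas : StronglyMeasurable m :=
      StronglyMeasurable.integral_prod_left' (hGmeas.stronglyMeasurable)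
    have hmbd : ∀ x, |m x| ≤ M := by
      intro x
      have := norm_integral_le_of_norm_le_const (μ := ν 0)
        (f := fun y => G (y, x)) (C := M) (Filter.Eventually.of_forall fun y => by
          simpa using hGbd (y, x))
      simpa [measure_univ] using this
    have hmdiff : ∀ (i : Fin n) (x y : Fin n → ℂ), (∀ j, j ≠ i → x j = y j) →
        m x - m y ≤ c ((0 : Fin (n + 1)).succAbove i) := by
      intro i x y hxy
      have hint1 : Integrable (fun z => G (z, x)) (ν 0) :=
        my_integrable_of_bound _ _ (hGmeas.comp (measurable_id.prodMk measurable_const)).aestronglyMeasurable M (fun z => hGbd _)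
      have hint2 : Integrable (fun z => G (z, y)) (ν 0) :=
        my_integrable_of_bound _ _ (hGmeas.comp (measurable_id.prodMk measurable_const)).aestronglyMeasurable M (fun z => hGbd _)
      rw [hm]
      rw [← integral_sub hint1 hint2]
      have hptwise : ∀ z, G (z, x) - G (z, y) ≤ c ((0 : Fin (n + 1)).succAbove i) := by
        intro z
        apply hc
        intro j hj
        rcases eq_or_ne j 0 with rfl | hj0
        · simp [hG, he, MeasurableEquiv.piFinSuccAbove_symm_apply, Fin.insertNthEquiv,
            Fin.insertNth_apply_same]
        · obtain ⟨k, rfl⟩ := Fin.exists_succAbove_eq hj0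
          have hki : k ≠ i := fun hk => hj (by rw [hk])
          simp [hG, he, MeasurableEquiv.piFinSuccAbove_symm_apply, Fin.insertNthEquiv,
            Fin.insertNth_apply_succAbove, hxy k hki]
      calc ∫ z, (G (z, x) - G (z, y)) ∂(ν 0) ≤ ∫ _z, c ((0 : Fin (n + 1)).succAbove i) ∂(ν 0) :=
            integral_mono (hint1.sub hint2) (integrable_const _) hptwise
        _ = c ((0 : Fin (n + 1)).succAbove i) := by simp [measure_univ]
    -- Hoeffding step on coordinate 0
    have hinner : ∀ x : Fin n → ℂ, (∫ y, Real.exp (t * G (y, x)) ∂(ν 0)) ≤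
        Real.exp (t * m x + t ^ 2 * (c 0) ^ 2 / 8) := by
      intro x
      have hYmeas : Measurable (fun y => G (y, x)) :=
        hGmeas.comp (measurable_id.prodMk measurable_const)
      set A : ℝ := ⨅ y : ℂ, G (y, x) with hA
      have hbdd : BddBelow (Set.range fun y : ℂ => G (y, x)) :=
        ⟨-M, by rintro _ ⟨y, rfl⟩; linarith [abs_le.1 (hGbd (y, x))]⟩
      have hab : ∀ y : ℂ, G (y, x) ∈ Set.Icc A (A + c 0) := by
        intro y
        constructor
        · exact ciInf_le hbdd y
        · have : G (y, x) - c 0 ≤ A := le_ciInf fun y' => by linarith [hdiff0 x y y']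
          linarith
      have := hoeffding_lemma (ν 0) (fun y => G (y, x)) hYmeas A (A + c 0) hab t
      simpa [hm] using this
    -- Fubini and outer bound
    have hprodint : Integrable (fun q => Real.exp (t * G q)) ((ν 0).prod π') := by
      refine my_integrable_of_bound _ _
        ((Real.measurable_exp.comp (hGmeas.const_mul t)).aestronglyMeasurable)
        (Real.exp (|t| * M)) fun q => ?_
      rw [abs_of_pos (Real.exp_pos _), Real.exp_le_exp]
      calc t * G q ≤ |t * G q| := le_abs_self _
        _ = |t| * |G q| := abs_mul _ _
        _ ≤ |t| * M := mul_le_mul_of_nonneg_left (hGbd q) (abs_nonneg t)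
    have hfub : (∫ q, Real.exp (t * G q) ∂((ν 0).prod π')) =
        ∫ x, (∫ y, Real.exp (t * G (y, x)) ∂(ν 0)) ∂π' :=
      integral_prod_symm _ hprodint
    have hinnermeas : StronglyMeasurable (fun x => ∫ y, Real.exp (t * G (y, x)) ∂(ν 0)) :=
      StronglyMeasurable.integral_prod_left'
        ((Real.measurable_exp.comp (hGmeas.const_mul t)).stronglyMeasurable)
    have hinnerint : Integrable (fun x => ∫ y, Real.exp (t * G (y, x)) ∂(ν 0)) π' := by
      refine my_integrable_of_bound _ _ hinnermeas.aestronglyMeasurable (Real.exp (|t| * M))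
        fun x => ?_
      have h1 : ‖∫ y, Real.exp (t * G (y, x)) ∂(ν 0)‖ ≤ Real.exp (|t| * M) * ((ν 0) Set.univ).toReal := by
        apply norm_integral_le_of_norm_le_const
        refine Filter.Eventually.of_forall fun y => ?_
        rw [Real.norm_eq_abs, abs_of_pos (Real.exp_pos _), Real.exp_le_exp]
        calc t * G (y, x) ≤ |t * G (y, x)| := le_abs_self _
          _ = |t| * |G (y, x)| := abs_mul _ _
          _ ≤ |t| * M := mul_le_mul_of_nonneg_left (hGbd _) (abs_nonneg t)
      simpa [measure_univ] using h1
    have hexpmint : Integrable (fun x => Real.exp (t * m x + t ^ 2 * (c 0) ^ 2 / 8)) π' := by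
      refine my_integrable_of_bound _ _
        ((Real.measurable_exp.comp ((hmmeas.measurable.const_mul t).add_const _)).aestronglyMeasurable)
        (Real.exp (|t| * M + t ^ 2 * (c 0) ^ 2 / 8)) fun x => ?_
      rw [abs_of_pos (Real.exp_pos _), Real.exp_le_exp]
      have : t * m x ≤ |t| * M := by
        calc t * m x ≤ |t * m x| := le_abs_self _
          _ = |t| * |m x| := abs_mul _ _
          _ ≤ |t| * M := mul_le_mul_of_nonneg_left (hmbd x) (abs_nonneg t)
      linarith
    -- apply IH to m
    have hM0 : 0 ≤ M := le_trans (abs_nonneg _) (hM (fun _ => 0))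
    have hihm := ih ν' hν'p m hmmeas.measurable M hmbd
      (fun j => c ((0 : Fin (n + 1)).succAbove j)) hmdiff t
    -- putting it together
    have step1 : (∫ x, Real.exp (t * F x) ∂(Measure.pi ν)) =
        ∫ x, (∫ y, Real.exp (t * G (y, x)) ∂(ν 0)) ∂π' := by
      rw [htrans (fun x => Real.exp (t * F x)), ← hfub]
    have step2 : (∫ x, (∫ y, Real.exp (t * G (y, x)) ∂(ν 0)) ∂π') ≤
        ∫ x, Real.exp (t * m x + t ^ 2 * (c 0) ^ 2 / 8) ∂π' :=
      integral_mono hinnerint hexpmint hinner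
    have step3 : (∫ x, Real.exp (t * m x + t ^ 2 * (c 0) ^ 2 / 8) ∂π') =
        Real.exp (t ^ 2 * (c 0) ^ 2 / 8) * ∫ x, Real.exp (t * m x) ∂π' := by
      rw [← integral_const_mul]
      congr 1
      ext x
      rw [Real.exp_add]
      ring
    have step4 : (∫ x, m x ∂π') = ∫ x, F x ∂(Measure.pi ν) := by
      rw [htrans F]
      have hGint : Integrable G ((ν 0).prod π') :=
        my_integrable_of_bound _ _ hGmeas.aestronglyMeasurable M hGbd
      rw [integral_prod_symm _ hGint]
    calc (∫ x, Real.exp (t * F x) ∂(Measure.pi ν))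
        ≤ ∫ x, Real.exp (t * m x + t ^ 2 * (c 0) ^ 2 / 8) ∂π' := by rw [step1]; exact step2
      _ = Real.exp (t ^ 2 * (c 0) ^ 2 / 8) * ∫ x, Real.exp (t * m x) ∂π' := step3
      _ ≤ Real.exp (t ^ 2 * (c 0) ^ 2 / 8) *
            Real.exp (t * (∫ x, m x ∂π') + t ^ 2 * (∑ j, (c ((0 : Fin (n + 1)).succAbove j)) ^ 2) / 8) :=
          mul_le_mul_of_nonneg_left hihm (Real.exp_pos _).le
      _ = Real.exp (t * ∫ x, F x ∂(Measure.pi ν) + t ^ 2 * (∑ i, (c i) ^ 2) / 8) := by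
          rw [← Real.exp_add, step4]
          congr 1
          rw [Fin.sum_univ_succAbove (fun i => (c i) ^ 2) 0]
          ring

lemma norm_exp_unit (r : ℝ) : ‖Complex.exp (Complex.I * (r : ℂ))‖ = 1 := by
  rw [Complex.norm_exp]
  simp

lemma ofdm_norm_le (n : ℕ) (T : ℝ) (x : Fin n → ℂ) (t : ℝ) :
    ‖ofdm n T x t‖ ≤ (Real.sqrt n)⁻¹ * ∑ i, ‖x i‖ := by
  rw [ofdm, norm_mul]
  have h1 : ‖(((Real.sqrt n : ℝ) : ℂ))⁻¹‖ = (Real.sqrt n)⁻¹ := by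
    rw [norm_inv, Complex.norm_real, Real.norm_eq_abs, abs_of_nonneg (Real.sqrt_nonneg _)]
  rw [h1]
  gcongr
  calc ‖∑ i, x i * Complex.exp (Complex.I * ((2 * Real.pi * (i : ℕ) * t / T : ℝ) : ℂ))‖
      ≤ ∑ i, ‖x i * Complex.exp (Complex.I * ((2 * Real.pi * (i : ℕ) * t / T : ℝ) : ℂ))‖ :=
        norm_sum_le _ _
    _ = ∑ i, ‖x i‖ := by
        congr 1; ext i; rw [norm_mul, norm_exp_unit, mul_one]

lemma ofdm_sub_norm_le (n : ℕ) (T : ℝ) (x y : Fin n → ℂ) (t : ℝ) :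
    ‖ofdm n T x t - ofdm n T y t‖ ≤ (Real.sqrt n)⁻¹ * ∑ i, ‖x i - y i‖ := by
  have hsub : ofdm n T x t - ofdm n T y t = ofdm n T (x - y) t := by
    rw [ofdm, ofdm, ofdm, ← mul_sub, ← Finset.sum_sub_distrib]
    congr 1
    refine Finset.sum_congr rfl fun i _ => ?_
    simp [sub_mul]
  rw [hsub]
  simpa using ofdm_norm_le n T (x - y) t

lemma crest_bddAbove (n : ℕ) (T : ℝ) (x : Fin n → ℂ) :
    BddAbove ((fun t => ‖ofdm n T x t‖) '' Set.Icc (0 : ℝ) T) := by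
  refine ⟨(Real.sqrt n)⁻¹ * ∑ i, ‖x i‖, ?_⟩
  rintro _ ⟨t, _, rfl⟩
  exact ofdm_norm_le n T x t

lemma le_crest (n : ℕ) (T : ℝ) (x : Fin n → ℂ) {t : ℝ} (ht : t ∈ Set.Icc (0 : ℝ) T) :
    ‖ofdm n T x t‖ ≤ crest n T x :=
  le_csSup (crest_bddAbove n T x) ⟨t, ht, rfl⟩

lemma crest_nonneg (n : ℕ) {T : ℝ} (hT : 0 ≤ T) (x : Fin n → ℂ) : 0 ≤ crest n T x :=
  le_trans (norm_nonneg _) (le_crest n T x (Set.mem_Icc.2 ⟨le_refl 0, hT⟩))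

lemma crest_le (n : ℕ) {T : ℝ} (x : Fin n → ℂ) {B : ℝ} (hB : 0 ≤ B)
    (h : ∀ t ∈ Set.Icc (0 : ℝ) T, ‖ofdm n T x t‖ ≤ B) : crest n T x ≤ B := by
  apply Real.sSup_le _ hB
  rintro _ ⟨t, ht, rfl⟩
  exact h t ht

lemma crest_diff_le (n : ℕ) {T : ℝ} (hT : 0 ≤ T) (x y : Fin n → ℂ) :
    crest n T x - crest n T y ≤ (Real.sqrt n)⁻¹ * ∑ i, ‖x i - y i‖ := by
  set d := (Real.sqrt n)⁻¹ * ∑ i, ‖x i - y i‖ with hd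
  have hd0 : 0 ≤ d :=
    mul_nonneg (inv_nonneg.2 (Real.sqrt_nonneg _)) (Finset.sum_nonneg fun i _ => norm_nonneg _)
  rw [sub_le_iff_le_add]
  apply crest_le n x (by linarith [crest_nonneg n hT y])
  intro t ht
  calc ‖ofdm n T x t‖ ≤ ‖ofdm n T y t‖ + ‖ofdm n T x t - ofdm n T y t‖ := by
        have := norm_add_le (ofdm n T y t) (ofdm n T x t - ofdm n T y t)
        simpa using this
    _ ≤ crest n T y + d := add_le_add (le_crest n T y ht) (ofdm_sub_norm_le n T x y t)
    _ = d + crest n T y := add_comm _ _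

lemma crest_abs_le (n : ℕ) {T : ℝ} (hT : 0 ≤ T) (x : Fin n → ℂ) :
    |crest n T x| ≤ (Real.sqrt n)⁻¹ * ∑ i, ‖x i‖ := by
  have hB : 0 ≤ (Real.sqrt n)⁻¹ * ∑ i, ‖x i‖ :=
    mul_nonneg (inv_nonneg.2 (Real.sqrt_nonneg _)) (Finset.sum_nonneg fun i _ => norm_nonneg _)
  rw [abs_le]
  exact ⟨le_trans (by linarith) (crest_nonneg n hT x),
    crest_le n x hB fun t _ => ofdm_norm_le n T x t⟩

lemma crest_lipschitz (n : ℕ) {T : ℝ} (hT : 0 ≤ T) (hn : 0 < n) :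
    LipschitzWith (n : NNReal) (crest n T) := by
  apply LipschitzWith.of_dist_le_mul
  intro x y
  rw [Real.dist_eq, abs_sub_le_iff]
  have key : ∀ u v : Fin n → ℂ, crest n T u - crest n T v ≤ (n : ℝ) * dist u v := by
    intro u v
    refine le_trans (crest_diff_le n hT u v) ?_
    have h1 : (∑ i, ‖u i - v i‖) ≤ (n : ℝ) * dist u v := by
      calc (∑ i, ‖u i - v i‖) = ∑ i : Fin n, dist (u i) (v i) :=
            Finset.sum_congr rfl fun i _ => (dist_eq_norm _ _).symm
        _ ≤ ∑ _i : Fin n, dist u v := Finset.sum_le_sum fun i _ => dist_le_pi_dist u v i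
        _ = (n : ℝ) * dist u v := by simp [mul_comm]
    have h2 : (Real.sqrt n)⁻¹ ≤ 1 := by
      rw [inv_le_one_iff₀]
      right
      rw [Real.le_sqrt' one_pos]
      norm_num
      exact_mod_cast hn
    calc (Real.sqrt n)⁻¹ * ∑ i, ‖u i - v i‖ ≤ 1 * ∑ i, ‖u i - v i‖ := by
          apply mul_le_mul_of_nonneg_right h2 (Finset.sum_nonneg fun i _ => norm_nonneg _)
      _ = ∑ i, ‖u i - v i‖ := one_mul _
      _ ≤ (n : ℝ) * dist u v := h1
  constructor
  · simpa using key x y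
  · have := key y x
    rw [dist_comm y x] at this
    simpa using this

end McDiarmidAux

theorem stmt_6 {Ω : Type*} [MeasurableSpace Ω] (μ : Measure Ω) [IsProbabilityMeasure μ]
    (n : ℕ) (hn : 0 < n) (T : ℝ) (hT : 0 < T)
    (X : Fin n → Ω → ℂ) (hmeas : ∀ j, Measurable (X j))
    (hindep : ProbabilityTheory.iIndepFun X μ)
    (hunit : ∀ j, ∀ᵐ ω ∂μ, ‖X j ω‖ = 1)
    (α : ℝ) (hα : 0 ≤ α) :
    (μ {ω | α ≤ |crest n T (fun j => X j ω) -
        ∫ ω', crest n T (fun j => X j ω') ∂μ|}).toReal ≤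
      2 * Real.exp (-α ^ 2 / 2) := by
  classical
  set cr : (Fin n → ℂ) → ℝ := crest n T with hcr
  have hcrmeas : Measurable cr := (crest_lipschitz n hT.le hn).continuous.measurable
  set Φ : Ω → (Fin n → ℂ) := fun ω j => X j ω with hΦ
  have hΦmeas : Measurable Φ := measurable_pi_lambda _ hmeas
  set ν : Fin n → Measure ℂ := fun i => μ.map (X i) with hν
  haveI hνp : ∀ i, IsProbabilityMeasure (ν i) := fun i =>
    Measure.isProbabilityMeasure_map (hmeas i).aemeasurable
  set π : Measure (Fin n → ℂ) := Measure.pi ν with hπ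
  haveI : IsProbabilityMeasure π := Measure.pi.instIsProbabilityMeasure ν
  -- the joint law is the product measure
  have hmap : μ.map Φ = π := by
    rw [hπ]
    refine (Measure.pi_eq fun s hs => ?_).symm
    rw [Measure.map_apply hΦmeas (MeasurableSet.univ_pi hs)]
    have hpre : Φ ⁻¹' Set.pi Set.univ s = ⋂ i ∈ Finset.univ, X i ⁻¹' s i := by
      ext ω
      simp [Set.mem_pi, hΦ]
    rw [hpre, hindep.measure_inter_preimage_eq_mul Finset.univ (fun i _ => hs i)]
    refine Finset.prod_congr rfl fun i _ => ?_
    rw [hν, Measure.map_apply (hmeas i) (hs i)]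
  -- expectation transfer
  set E : ℝ := ∫ ω', cr (Φ ω') ∂μ with hE
  have hEeq : (∫ x, cr x ∂π) = E := by
    rw [← hmap, integral_map hΦmeas.aemeasurable hcrmeas.aestronglyMeasurable]
  -- measure transfer
  have hsetmeas : MeasurableSet {x : Fin n → ℂ | α ≤ |cr x - E|} := by
    apply measurableSet_le measurable_const
    exact ((hcrmeas.sub measurable_const).abs)
  have hμπ : μ {ω | α ≤ |cr (Φ ω) - E|} = π {x | α ≤ |cr x - E|} := by
    rw [← hmap, Measure.map_apply hΦmeas hsetmeas]
    rfl
  -- the projection to the unit circle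
  set r : ℂ → ℂ := fun z => if ‖z‖ = 1 then z else 1 with hr
  have hrmeas : Measurable r := by
    apply Measurable.ite _ measurable_id measurable_const
    exact measurable_norm (measurableSet_singleton (1 : ℝ))
  have hrunit : ∀ z, ‖r z‖ = 1 := by
    intro z
    show ‖if ‖z‖ = 1 then z else (1:ℂ)‖ = 1
    split_ifs with h
    · exact h
    · simp
  set F : (Fin n → ℂ) → ℝ := fun x => cr (fun i => r (x i)) with hF
  have hFmeas : Measurable F :=
    hcrmeas.comp (measurable_pi_lambda _ fun i => hrmeas.comp (measurable_pi_apply i))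
  set M : ℝ := (Real.sqrt n)⁻¹ * n with hM
  have hFbd : ∀ x, |F x| ≤ M := by
    intro x
    have := crest_abs_le n hT.le (fun i => r (x i))
    simpa [hrunit, hM] using this
  set c : Fin n → ℝ := fun _ => 2 * (Real.sqrt n)⁻¹ with hc
  have hFdiff : ∀ (i : Fin n) (x y : Fin n → ℂ), (∀ j, j ≠ i → x j = y j) →
      F x - F y ≤ c i := by
    intro i x y hxy
    refine le_trans (crest_diff_le n hT.le _ _) ?_
    have hsum : (∑ j, ‖r (x j) - r (y j)‖) = ‖r (x i) - r (y i)‖ := by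
      apply Finset.sum_eq_single i
      · intro j _ hj
        rw [hxy j hj]
        simp
      · intro h
        exact absurd (Finset.mem_univ i) h
    rw [hsum, hc]
    have h2 : ‖r (x i) - r (y i)‖ ≤ 2 := by
      calc ‖r (x i) - r (y i)‖ ≤ ‖r (x i)‖ + ‖r (y i)‖ := norm_sub_le _ _
        _ = 2 := by rw [hrunit, hrunit]; norm_num
    calc (Real.sqrt n)⁻¹ * ‖r (x i) - r (y i)‖ ≤ (Real.sqrt n)⁻¹ * 2 :=
          mul_le_mul_of_nonneg_left h2 (inv_nonneg.2 (Real.sqrt_nonneg _))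
      _ = 2 * (Real.sqrt n)⁻¹ := mul_comm _ _
  have hsumc : (∑ i, (c i) ^ 2) = 4 := by
    have hsqrt : (Real.sqrt n) ^ 2 = (n : ℝ) := Real.sq_sqrt (Nat.cast_nonneg n)
    have hnne : (n : ℝ) ≠ 0 := ne_of_gt (Nat.cast_pos.2 hn)
    rw [hc]
    rw [Finset.sum_const, Finset.card_univ, Fintype.card_fin, nsmul_eq_mul]
    rw [mul_pow, inv_pow, hsqrt]
    field_simp
    norm_num
  -- a.e. unit circle
  set S : Set (Fin n → ℂ) := Set.pi Set.univ (fun _ => {z : ℂ | ‖z‖ = 1}) with hS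
  have hSmeas : MeasurableSet S :=
    MeasurableSet.univ_pi fun i => measurable_norm (measurableSet_singleton (1 : ℝ))
  have hSone : π S = 1 := by
    rw [hπ, hS, Measure.pi_pi]
    have : ∀ i : Fin n, ν i {z : ℂ | ‖z‖ = 1} = 1 := by
      intro i
      have hms1 : MeasurableSet {z : ℂ | ‖z‖ = 1} :=
        measurable_norm (measurableSet_singleton (1 : ℝ))
      show (μ.map (X i)) {z : ℂ | ‖z‖ = 1} = 1
      rw [Measure.map_apply (hmeas i) hms1]
      have hae := hunit i
      have h0 : μ {ω | ¬ ‖X i ω‖ = 1} = 0 := by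
        rw [← ae_iff.symm] at hae
        exact ae_iff.1 hae
      have hms : MeasurableSet {ω | ‖X i ω‖ = 1} :=
        (hmeas i).norm (measurableSet_singleton (1:ℝ))
      have := measure_add_measure_compl (μ := μ) hms
      rw [measure_univ] at this
      have hcompl : {ω | ‖X i ω‖ = 1}ᶜ = {ω | ¬ ‖X i ω‖ = 1} := rfl
      rw [hcompl, h0, add_zero] at this
      exact this
    rw [Finset.prod_congr rfl fun i _ => this i]
    simp
  have hae : ∀ᵐ x ∂π, x ∈ S := by
    rw [ae_iff]
    have := measure_add_measure_compl (μ := π) hSmeas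
    rw [measure_univ, hSone] at this
    have : π Sᶜ = 0 := by
      have h1 : (1 : ENNReal) + π Sᶜ = 1 := this
      have h2 : π Sᶜ ≤ 1 := prob_le_one
      by_contra hne
      have h3 : (1 : ENNReal) < 1 + π Sᶜ :=
        ENNReal.lt_add_right ENNReal.one_ne_top hne
      rw [h1] at h3
      exact lt_irrefl _ h3
    exact this
  have hFS : ∀ x ∈ S, F x = cr x := by
    intro x hx
    have hproj : (fun i => r (x i)) = x := by
      funext i
      have h1 : ‖x i‖ = 1 := hx i (Set.mem_univ i)
      show (if ‖x i‖ = 1 then x i else (1:ℂ)) = x i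
      rw [if_pos h1]
    show cr (fun i => r (x i)) = cr x
    rw [hproj]
  -- switch from cr to F
  have hEF : (∫ x, F x ∂π) = E := by
    rw [← hEeq]
    apply integral_congr_ae
    filter_upwards [hae] with x hx
    exact hFS x hx
  have hsetae : π {x | α ≤ |cr x - E|} = π {x | α ≤ |F x - E|} := by
    apply measure_congr
    rw [Filter.eventuallyEq_set]
    filter_upwards [hae] with x hx
    rw [hFS x hx]
  -- Chernoff, upper tail
  have hexpint : ∀ s : ℝ, Integrable (fun x => Real.exp (s * (F x - E))) π := by
    intro s
    refine my_integrable_of_bound _ _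
      ((Real.measurable_exp.comp ((hFmeas.sub measurable_const).const_mul s)).aestronglyMeasurable)
      (Real.exp (|s| * (M + |E|))) fun x => ?_
    rw [abs_of_pos (Real.exp_pos _), Real.exp_le_exp]
    calc s * (F x - E) ≤ |s * (F x - E)| := le_abs_self _
      _ = |s| * |F x - E| := abs_mul _ _
      _ ≤ |s| * (M + |E|) := by
          apply mul_le_mul_of_nonneg_left _ (abs_nonneg s)
          calc |F x - E| ≤ |F x| + |E| := abs_sub _ _
            _ ≤ M + |E| := by linarith [hFbd x]
  have hmgf : ∀ s : ℝ, ProbabilityTheory.mgf (fun x => F x - E) π s ≤ Real.exp (s ^ 2 / 2) := by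
    intro s
    rw [ProbabilityTheory.mgf]
    have heq : ∀ x : Fin n → ℂ, Real.exp (s * (F x - E)) = Real.exp (s * F x) / Real.exp (s * E) := by
      intro x
      rw [← Real.exp_sub]
      congr 1
      ring
    calc (∫ x, Real.exp (s * (F x - E)) ∂π) = (∫ x, Real.exp (s * F x) ∂π) / Real.exp (s * E) := by
          simp_rw [heq]
          rw [integral_div]
      _ ≤ Real.exp (s * E + s ^ 2 * 4 / 8) / Real.exp (s * E) := by
          gcongr
          have := tensor n ν hνp F hFmeas M hFbd c hFdiff s
          rw [hsumc, hEF] at this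
          exact this
      _ = Real.exp (s ^ 2 / 2) := by
          rw [← Real.exp_sub]
          congr 1
          ring
  have hup : (π {x | α ≤ F x - E}).toReal ≤ Real.exp (-α ^ 2 / 2) := by
    have := ProbabilityTheory.measure_ge_le_exp_mul_mgf (X := fun x => F x - E) (μ := π)
      (t := α) α hα (hexpint α)
    refine le_trans this ?_
    calc Real.exp (-α * α) * ProbabilityTheory.mgf (fun x => F x - E) π α
        ≤ Real.exp (-α * α) * Real.exp (α ^ 2 / 2) :=
          mul_le_mul_of_nonneg_left (hmgf α) (Real.exp_pos _).le
      _ = Real.exp (-α ^ 2 / 2) := by rw [← Real.exp_add]; congr 1; ring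
  have hexpint2 : ∀ s : ℝ, Integrable (fun x => Real.exp (s * (E - F x))) π := by
    intro s
    have := hexpint (-s)
    convert this using 2 with x
    congr 1
    ring
  have hlow : (π {x | α ≤ E - F x}).toReal ≤ Real.exp (-α ^ 2 / 2) := by
    have := ProbabilityTheory.measure_ge_le_exp_mul_mgf (X := fun x => E - F x) (μ := π)
      (t := α) α hα (hexpint2 α)
    refine le_trans this ?_
    have hmgf2 : ProbabilityTheory.mgf (fun x => E - F x) π α ≤ Real.exp (α ^ 2 / 2) := by
      rw [ProbabilityTheory.mgf]
      have heq : ∀ x : Fin n → ℂ, Real.exp (α * (E - F x)) = Real.exp ((-α) * (F x - E)) := by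
        intro x; congr 1; ring
      simp_rw [heq]
      have := hmgf (-α)
      rw [ProbabilityTheory.mgf] at this
      calc (∫ x, Real.exp ((-α) * (F x - E)) ∂π) ≤ Real.exp ((-α) ^ 2 / 2) := this
        _ = Real.exp (α ^ 2 / 2) := by congr 1; ring
    calc Real.exp (-α * α) * ProbabilityTheory.mgf (fun x => E - F x) π α
        ≤ Real.exp (-α * α) * Real.exp (α ^ 2 / 2) :=
          mul_le_mul_of_nonneg_left hmgf2 (Real.exp_pos _).le
      _ = Real.exp (-α ^ 2 / 2) := by rw [← Real.exp_add]; congr 1; ring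
  -- combine
  have hsub : {x : Fin n → ℂ | α ≤ |F x - E|} ⊆ {x | α ≤ F x - E} ∪ {x | α ≤ E - F x} := by
    intro x hx
    have hx' : α ≤ |F x - E| := hx
    rcases le_abs.1 hx' with h | h
    · exact Or.inl h
    · exact Or.inr (by simpa [neg_sub] using h)
  have hfinal : (π {x | α ≤ |F x - E|}).toReal ≤ 2 * Real.exp (-α ^ 2 / 2) := by
    have h1 : π {x | α ≤ |F x - E|} ≤ π {x | α ≤ F x - E} + π {x | α ≤ E - F x} :=
      le_trans (measure_mono hsub) (measure_union_le _ _)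
    have h2 : (π {x | α ≤ |F x - E|}).toReal ≤
        (π {x | α ≤ F x - E}).toReal + (π {x | α ≤ E - F x}).toReal := by
      rw [← ENNReal.toReal_add (measure_ne_top _ _) (measure_ne_top _ _)]
      exact ENNReal.toReal_mono
        (ENNReal.add_ne_top.2 ⟨measure_ne_top _ _, measure_ne_top _ _⟩) h1
    linarith [hup, hlow]
  -- conclude
  have hconc : (μ {ω | α ≤ |cr (Φ ω) - E|}).toReal ≤ 2 * Real.exp (-α ^ 2 / 2) := by
    rw [hμπ, hsetae]
    exact hfinal
  exact hconc
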